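/- Let α, β, γ be complex numbers with (α+1)/2, (β+1)/2, γ not non-positive integers, with Re(2γ−α−β) < 1. Define S(α,β,γ) = ∑_{n=0}^∞ (1/2)_n (γ+1)_n / (((α+1)/2)_{n+1} ((β+1)/2)_{n+1}). Then 2γ(2γ−α−β−1)·S(α,β,γ)/4 − (2γ−α−1)(2γ−β−1)·S(α,β,γ−1)/4 + 1 = 0. -/

import Mathlib

/-- Pochhammer symbol (rising factorial) `(a)_n = a(a+1)⋯(a+n-1)`. -/
noncomputable def poch (a : ℂ) (n : ℕ) : ℂ := (ascPochhammer ℂ n).eval a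

/-- The series `S(α,β,γ) = ∑_{n=0}^∞ (1/2)_n (γ+1)_n / ((α+1)/2)_{n+1} ((β+1)/2)_{n+1}`. -/
noncomputable def S (α β γ : ℂ) : ℂ :=
  ∑' n : ℕ, poch (1 / 2) n * poch (γ + 1) n /
    (poch ((α + 1) / 2) (n + 1) * poch ((β + 1) / 2) (n + 1))

open Filter Topology Finset Complex


lemma poch_zero (c : ℂ) : poch c 0 = 1 := by simp [poch]

lemma poch_succ (c : ℂ) (n : ℕ) : poch c (n + 1) = poch c n * (c + n) := by
  simp [poch, ascPochhammer_succ_eval]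

lemma poch_succ_left (c : ℂ) (n : ℕ) : poch c (n + 1) = c * poch (c + 1) n := by
  simp [poch, ascPochhammer_succ_left]

lemma poch_ne_zero {c : ℂ} (hc : ∀ k : ℕ, c ≠ -(k : ℂ)) (n : ℕ) : poch c n ≠ 0 := by
  induction n with
  | zero => simp [poch]
  | succ n ih =>
    rw [poch_succ]
    exact mul_ne_zero ih (fun h => hc n (by linear_combination h))

lemma poch_eq_prod (c : ℂ) (n : ℕ) : poch c n = ∏ j ∈ Finset.range n, (c + j) := by
  induction n with
  | zero => simp [poch]
  | succ n ih => rw [poch_succ, ih, Finset.prod_range_succ]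

lemma gammaSeq_mul_poch {c : ℂ} (hc : ∀ k : ℕ, c ≠ -(k : ℂ)) (n : ℕ) :
    Complex.GammaSeq c n * poch c (n + 1) = (n : ℂ) ^ c * ((Nat.factorial n : ℕ) : ℂ) := by
  rw [Complex.GammaSeq, ← poch_eq_prod, div_mul_cancel₀ _ (poch_ne_zero hc (n + 1))]

lemma gammaSeq_ne_zero {c : ℂ} (hc : ∀ k : ℕ, c ≠ -(k : ℂ)) {n : ℕ} (hn : 1 ≤ n) :
    Complex.GammaSeq c n ≠ 0 := by
  have hn0 : ((n : ℂ)) ≠ 0 := Nat.cast_ne_zero.2 (by omega)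
  intro h
  have h2 := gammaSeq_mul_poch hc n
  rw [h, zero_mul] at h2
  have h3 : ((n : ℂ)) ^ c ≠ 0 := by
    simp [Complex.cpow_eq_zero_iff, hn0]
  have h4 : (((Nat.factorial n : ℕ) : ℂ)) ≠ 0 := Nat.cast_ne_zero.2 (Nat.factorial_ne_zero n)
  exact mul_ne_zero h3 h4 h2.symm

lemma tendsto_inv_nat : Tendsto (fun n : ℕ => ((n : ℂ))⁻¹) atTop (𝓝 0) := by
  have h := tendsto_one_div_atTop_nhds_zero_nat (𝕜 := ℝ)
  have : Tendsto (fun n : ℕ => (((1 : ℝ) / n : ℝ) : ℂ)) atTop (𝓝 ((0 : ℝ) : ℂ)) :=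
    (Complex.continuous_ofReal.tendsto _).comp h
  simpa [one_div] using this

lemma tendsto_add_div_nat (c : ℂ) :
    Tendsto (fun n : ℕ => ((n : ℂ) + c) / n) atTop (𝓝 1) := by
  have h1 : Tendsto (fun n : ℕ => 1 + c * ((n : ℂ))⁻¹) atTop (𝓝 (1 + c * 0)) :=
    tendsto_const_nhds.add (tendsto_const_nhds.mul tendsto_inv_nat)
  rw [mul_zero, add_zero] at h1
  apply h1.congr'
  filter_upwards [eventually_ge_atTop 1] with n hn
  have hn0 : ((n : ℂ)) ≠ 0 := Nat.cast_ne_zero.2 (by omega)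
  field_simp

lemma tendsto_div_add_nat (c : ℂ) :
    Tendsto (fun n : ℕ => (n : ℂ) / ((n : ℂ) + c)) atTop (𝓝 1) := by
  have h1 := (tendsto_add_div_nat c).inv₀ one_ne_zero
  rw [inv_one] at h1
  apply h1.congr'
  filter_upwards [eventually_ge_atTop 1] with n hn
  rw [inv_div]

lemma tendsto_cpow_neg_re {w : ℂ} (hw : w.re < 0) :
    Tendsto (fun n : ℕ => (n : ℂ) ^ w) atTop (𝓝 0) := by
  rw [tendsto_zero_iff_norm_tendsto_zero]
  have h : Tendsto (fun x : ℝ => x ^ (-(-w.re))) atTop (𝓝 0) :=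
    tendsto_rpow_neg_atTop (by linarith)
  have h2 := h.comp (tendsto_natCast_atTop_atTop (R := ℝ))
  rw [neg_neg] at h2
  apply h2.congr'
  filter_upwards [eventually_ge_atTop 1] with n hn
  exact (Complex.norm_natCast_cpow_of_pos (by omega) w).symm

lemma half_ne (k : ℕ) : (1/2 : ℂ) ≠ -(k : ℂ) := by
  intro h
  have h' : (2⁻¹ : ℝ) = -(k:ℝ) := by
    have := congrArg Complex.re h
    simpa using this
  have : (0:ℝ) ≤ (k:ℝ) := k.cast_nonneg
  linarith

set_option maxHeartbeats 2000000 in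
lemma tendsto_key (a b δ : ℂ) (ha : ∀ k : ℕ, a ≠ -(k:ℂ)) (hb : ∀ k : ℕ, b ≠ -(k:ℂ))
    (hδ : ∀ k : ℕ, δ + 1 ≠ -(k:ℂ)) :
    Tendsto (fun n : ℕ => poch (1/2) n * poch (δ+1) n / (poch a (n+1) * poch b (n+1))
        * (n : ℂ) ^ (a + b - δ + 1/2)) atTop
      (𝓝 (Gamma a * Gamma b / (Gamma (1/2) * Gamma (δ+1)))) := by
  have hGhalf : Gamma (1/2 : ℂ) ≠ 0 := Complex.Gamma_ne_zero (by simpa using half_ne)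
  have hGδ : Gamma (δ+1) ≠ 0 := Complex.Gamma_ne_zero (by simpa using hδ)
  have hF : Tendsto (fun n : ℕ =>
      (GammaSeq a n * GammaSeq b n) / (GammaSeq (1/2) n * GammaSeq (δ+1) n)
        * (((n:ℂ)/((n:ℂ)+1/2)) * ((n:ℂ)/((n:ℂ)+(δ+1))))) atTop
      (𝓝 ((Gamma a * Gamma b) / (Gamma (1/2) * Gamma (δ+1)) * (1 * 1))) := by
    exact (((Complex.GammaSeq_tendsto_Gamma a).mul (Complex.GammaSeq_tendsto_Gamma b)).div
      ((Complex.GammaSeq_tendsto_Gamma (1/2)).mul (Complex.GammaSeq_tendsto_Gamma (δ+1)))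
      (mul_ne_zero hGhalf hGδ)).mul
      ((tendsto_div_add_nat (1/2)).mul (tendsto_div_add_nat (δ+1)))
  simp only [mul_one] at hF
  apply hF.congr'
  filter_upwards [eventually_ge_atTop 1] with n hn
  have hn0 : ((n:ℂ)) ≠ 0 := Nat.cast_ne_zero.2 (by omega)
  have hfac : ((Nat.factorial n : ℕ) : ℂ) ≠ 0 := Nat.cast_ne_zero.2 (Nat.factorial_ne_zero n)
  have e1 := gammaSeq_mul_poch ha n
  have e2 := gammaSeq_mul_poch hb n
  have e3 := gammaSeq_mul_poch half_ne n
  have e4 := gammaSeq_mul_poch hδ n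
  have hGa := gammaSeq_ne_zero ha hn
  have hGb := gammaSeq_ne_zero hb hn
  have hGh := gammaSeq_ne_zero half_ne hn
  have hGd := gammaSeq_ne_zero hδ hn
  have hDa := poch_ne_zero ha (n+1)
  have hDb := poch_ne_zero hb (n+1)
  have hP := poch_ne_zero half_ne n
  have hQ := poch_ne_zero hδ n
  have hna : ((n:ℂ)) ^ a ≠ 0 := by simp [Complex.cpow_eq_zero_iff, hn0]
  have hnb : ((n:ℂ)) ^ b ≠ 0 := by simp [Complex.cpow_eq_zero_iff, hn0]
  have hh1 : (1/2 : ℂ) + n ≠ 0 := fun h => half_ne n (by linear_combination h)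
  have hh2 : (δ + 1) + n ≠ 0 := fun h => hδ n (by linear_combination h)
  have f3 : poch (1/2) (n+1) = poch (1/2) n * (1/2 + n) := poch_succ _ n
  have f4 : poch (δ+1) (n+1) = poch (δ+1) n * ((δ+1) + n) := poch_succ _ n
  have hcpow : ((n:ℂ)) ^ ((1:ℂ)/2) * ((n:ℂ)) ^ (δ+1) * ((n:ℂ)) ^ (a+b-δ+1/2)
      = ((n:ℂ)) ^ a * ((n:ℂ)) ^ b * ((n:ℂ) * (n:ℂ)) := by
    rw [← Complex.cpow_add _ _ hn0, ← Complex.cpow_add _ _ hn0, ← Complex.cpow_add _ _ hn0]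
    rw [show (1:ℂ)/2 + (δ+1) + (a+b-δ+1/2) = a + b + 2 by ring]
    rw [show (2:ℂ) = ((2:ℕ):ℂ) by norm_num, Complex.cpow_add _ _ hn0, Complex.cpow_natCast]
    ring
  have hh1' : (n:ℂ) + 1/2 ≠ 0 := fun h => hh1 (by linear_combination h)
  have hh2' : (n:ℂ) + (δ+1) ≠ 0 := fun h => hh2 (by linear_combination h)
  have g3 : GammaSeq (1/2) n * poch (1/2) n * ((1:ℂ)/2 + n)
      = ((n:ℂ)) ^ ((1:ℂ)/2) * ((Nat.factorial n : ℕ) : ℂ) := by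
    linear_combination e3 - GammaSeq (1/2) n * f3
  have g4 : GammaSeq (δ+1) n * poch (δ+1) n * ((δ+1) + (n:ℂ))
      = ((n:ℂ)) ^ (δ+1) * ((Nat.factorial n : ℕ) : ℂ) := by
    linear_combination e4 - GammaSeq (δ+1) n * f4
  rw [div_mul_div_comm, div_mul_div_comm, div_mul_eq_mul_div,
    div_eq_div_iff (by exact mul_ne_zero (mul_ne_zero hGh hGd) (mul_ne_zero hh1' hh2'))
      (mul_ne_zero hDa hDb)]
  linear_combination (GammaSeq b n * poch b (n+1) * (n:ℂ) * (n:ℂ)) * e1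
    + (((n:ℂ))^a * ((Nat.factorial n : ℕ) : ℂ) * (n:ℂ) * (n:ℂ)) * e2
    - (((Nat.factorial n : ℕ) : ℂ))^2 * hcpow
    - (((n:ℂ))^(δ+1) * ((n:ℂ))^(a+b-δ+1/2) * ((Nat.factorial n : ℕ) : ℂ)) * g3
    - (GammaSeq (1/2) n * poch (1/2) n * ((1:ℂ)/2+(n:ℂ)) * ((n:ℂ))^(a+b-δ+1/2)) * g4

lemma summable_key (a b δ : ℂ) (ha : ∀ k : ℕ, a ≠ -(k:ℂ)) (hb : ∀ k : ℕ, b ≠ -(k:ℂ))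
    (hδ : ∀ k : ℕ, δ + 1 ≠ -(k:ℂ)) (hre : 1 < (a + b - δ + 1/2).re) :
    Summable (fun n : ℕ => poch (1/2) n * poch (δ+1) n / (poch a (n+1) * poch b (n+1))) := by
  set s := a + b - δ + 1/2 with hs
  set L := Gamma a * Gamma b / (Gamma (1/2) * Gamma (δ+1)) with hL
  have hT := tendsto_key a b δ ha hb hδ
  have hbd : ∀ᶠ n : ℕ in atTop,
      ‖poch (1/2) n * poch (δ+1) n / (poch a (n+1) * poch b (n+1)) * (n:ℂ) ^ s‖ ≤ ‖L‖ + 1 := by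
    have := hT.norm.eventually_le_const (by linarith [norm_nonneg L] : ‖L‖ < ‖L‖ + 1)
    exact this
  apply Summable.of_norm_bounded_eventually_nat (g := fun n => (‖L‖ + 1) * ((n:ℝ) ^ (-s.re)))
  · exact (Real.summable_nat_rpow.2 (by linarith)).mul_left _
  · filter_upwards [hbd, eventually_ge_atTop 1] with n h1 h2
    have hpos : (0:ℝ) < (n:ℝ) ^ s.re := Real.rpow_pos_of_pos (by exact_mod_cast h2) _
    have hnorm : ‖((n:ℂ)) ^ s‖ = (n:ℝ) ^ s.re := Complex.norm_natCast_cpow_of_pos (by omega) s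
    rw [norm_mul, hnorm] at h1
    rw [Real.rpow_neg (Nat.cast_nonneg n), ← div_eq_mul_inv]
    rw [le_div_iff₀ hpos]
    exact h1

lemma tendsto_U_zero (a b γ : ℂ) (ha : ∀ k : ℕ, a ≠ -(k:ℂ)) (hb : ∀ k : ℕ, b ≠ -(k:ℂ))
    (hγ : ∀ k : ℕ, γ ≠ -(k:ℂ)) (hre : 2 < (a + b - (γ-1) + 1/2).re) :
    Tendsto (fun n : ℕ => poch (1/2) n * poch γ n / (poch a n * poch b n)) atTop (𝓝 0) := by
  set s := a + b - (γ-1) + 1/2 with hs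
  have hδ : ∀ k : ℕ, (γ - 1) + 1 ≠ -(k:ℂ) := fun k h => hγ k (by linear_combination h)
  have hT := tendsto_key a b (γ-1) ha hb hδ
  have hg : Tendsto (fun n : ℕ => ((n:ℂ) + 1/2) * ((n:ℂ) + γ) / (n:ℂ) ^ s) atTop (𝓝 0) := by
    have h1 : Tendsto (fun n : ℕ => (((n:ℂ) + 1/2)/n) * (((n:ℂ) + γ)/n) * (n:ℂ) ^ ((2:ℂ) - s))
        atTop (𝓝 (1 * 1 * 0)) :=
      ((tendsto_add_div_nat (1/2)).mul (tendsto_add_div_nat γ)).mul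
        (tendsto_cpow_neg_re (by simp [Complex.sub_re]; linarith))
    rw [mul_zero] at h1
    apply h1.congr'
    filter_upwards [eventually_ge_atTop 1] with n hn
    have hn0 : ((n:ℂ)) ≠ 0 := Nat.cast_ne_zero.2 (by omega)
    have hns : ((n:ℂ)) ^ s ≠ 0 := by simp [Complex.cpow_eq_zero_iff, hn0]
    rw [Complex.cpow_sub _ _ hn0, show ((2:ℂ)) = ((2:ℕ):ℂ) by norm_num, Complex.cpow_natCast]
    field_simp
  have h2 : Tendsto (fun n : ℕ =>
      (poch (1/2) n * poch ((γ-1)+1) n / (poch a (n+1) * poch b (n+1)) * (n:ℂ) ^ s)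
        * (((n:ℂ) + 1/2) * ((n:ℂ) + γ) / (n:ℂ) ^ s)) atTop
      (𝓝 (Gamma a * Gamma b / (Gamma (1/2) * Gamma ((γ-1)+1)) * 0)) := hT.mul hg
  rw [mul_zero] at h2
  rw [← tendsto_add_atTop_iff_nat 1]
  apply h2.congr'
  filter_upwards [eventually_ge_atTop 1] with n hn
  have hn0 : ((n:ℂ)) ≠ 0 := Nat.cast_ne_zero.2 (by omega)
  have hns : ((n:ℂ)) ^ s ≠ 0 := by simp [Complex.cpow_eq_zero_iff, hn0]
  have hDa := poch_ne_zero ha (n+1)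
  have hDb := poch_ne_zero hb (n+1)
  rw [sub_add_cancel, poch_succ (1/2) n, poch_succ γ n]
  field_simp
  ring

set_option maxHeartbeats 2000000 in
lemma tele (α β γ : ℂ)
    (hα : ∀ k : ℕ, (α + 1) / 2 ≠ -(k : ℂ))
    (hβ : ∀ k : ℕ, (β + 1) / 2 ≠ -(k : ℂ))
    (hγ : ∀ k : ℕ, γ ≠ -(k : ℂ)) (n : ℕ) :
    2 * γ * (2 * γ - α - β - 1) / 4 *
        (poch (1/2) n * poch (γ+1) n / (poch ((α+1)/2) (n+1) * poch ((β+1)/2) (n+1)))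
      - (2 * γ - α - 1) * (2 * γ - β - 1) / 4 *
        (poch (1/2) n * poch ((γ-1)+1) n / (poch ((α+1)/2) (n+1) * poch ((β+1)/2) (n+1)))
    = (poch (1/2) (n+1) * poch γ (n+1) / (poch ((α+1)/2) (n+1) * poch ((β+1)/2) (n+1)))
      - (poch (1/2) n * poch γ n / (poch ((α+1)/2) n * poch ((β+1)/2) n)) := by
  have hγ0 : γ ≠ 0 := by simpa using hγ 0
  have hRa := poch_ne_zero hα n
  have hRb := poch_ne_zero hβ n
  have han : (α+1)/2 + n ≠ 0 := fun h => hα n (by linear_combination h)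
  have hbn : (β+1)/2 + n ≠ 0 := fun h => hβ n (by linear_combination h)
  obtain ⟨u, hu⟩ : ∃ u, (α+1)/2 = u := ⟨_, rfl⟩
  obtain ⟨v, hv⟩ : ∃ v, (β+1)/2 = v := ⟨_, rfl⟩
  have hα' : α = 2*u - 1 := by rw [← hu]; ring
  have hβ' : β = 2*v - 1 := by rw [← hv]; ring
  rw [hu] at han hRa ⊢
  rw [hv] at hbn hRb ⊢
  rw [hα', hβ']
  have hGpγ : γ * poch (γ+1) n = poch γ n * (γ + (n:ℂ)) := by
    have h1 := poch_succ_left γ n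
    have h2 := poch_succ γ n
    linear_combination h2 - h1
  rw [sub_add_cancel, poch_succ u n, poch_succ v n, poch_succ (1/2) n, poch_succ γ n]
  have hD1 : poch u n * (u + (n:ℂ)) * (poch v n * (v + (n:ℂ))) ≠ 0 :=
    mul_ne_zero (mul_ne_zero hRa han) (mul_ne_zero hRb hbn)
  have hD2 : poch u n * poch v n ≠ 0 := mul_ne_zero hRa hRb
  rw [← mul_div_assoc, ← mul_div_assoc, div_sub_div_same, div_sub_div _ _ hD1 hD2,
    div_eq_div_iff hD1 (mul_ne_zero hD1 hD2)]
  linear_combination (2*(2*γ-(2*u-1)-(2*v-1)-1)/4 * poch (1/2) n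
    * (poch u n * (u + (n:ℂ)) * (poch v n * (v + (n:ℂ)))) * (poch u n * poch v n)) * hGpγ

theorem stmt6 (α β γ : ℂ)
    (hα : ∀ k : ℕ, (α + 1) / 2 ≠ -(k : ℂ))
    (hβ : ∀ k : ℕ, (β + 1) / 2 ≠ -(k : ℂ))
    (hγ : ∀ k : ℕ, γ ≠ -(k : ℂ))
    (hre : (2 * γ - α - β).re < 1) :
    2 * γ * (2 * γ - α - β - 1) * (S α β γ / 4) -
      (2 * γ - α - 1) * (2 * γ - β - 1) * (S α β (γ - 1) / 4) + 1 = 0 := by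
  have hγ1 : ∀ k : ℕ, γ + 1 ≠ -(k:ℂ) := fun k h => hγ (k+1) (by push_cast; linear_combination h)
  have hγ1' : ∀ k : ℕ, (γ - 1) + 1 ≠ -(k:ℂ) := fun k h => hγ k (by linear_combination h)
  have hre' : 2*γ.re - α.re - β.re < 1 := by
    have h := hre
    simp only [Complex.sub_re, Complex.mul_re, Complex.re_ofNat, Complex.im_ofNat] at h
    linarith
  have hre1 : 1 < ((α+1)/2 + (β+1)/2 - γ + 1/2).re := by
    have he : (α+1)/2 + (β+1)/2 - γ + 1/2 = ((2⁻¹:ℝ):ℂ) * (3 - (2*γ-α-β)) := by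
      push_cast; ring
    rw [he, Complex.re_ofReal_mul]
    simp only [Complex.sub_re]
    norm_num
    linarith [hre']
  have hre2 : 1 < ((α+1)/2 + (β+1)/2 - (γ-1) + 1/2).re := by
    have he : (α+1)/2 + (β+1)/2 - (γ-1) + 1/2 = ((2⁻¹:ℝ):ℂ) * (5 - (2*γ-α-β)) := by
      push_cast; ring
    rw [he, Complex.re_ofReal_mul]
    simp only [Complex.sub_re]
    norm_num
    linarith [hre']
  have hre3 : 2 < ((α+1)/2 + (β+1)/2 - (γ-1) + 1/2).re := by
    have he : (α+1)/2 + (β+1)/2 - (γ-1) + 1/2 = ((2⁻¹:ℝ):ℂ) * (5 - (2*γ-α-β)) := by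
      push_cast; ring
    rw [he, Complex.re_ofReal_mul]
    simp only [Complex.sub_re]
    norm_num
    linarith [hre']
  have hs1 : Summable (fun n : ℕ => poch (1/2) n * poch (γ+1) n /
      (poch ((α+1)/2) (n+1) * poch ((β+1)/2) (n+1))) :=
    summable_key _ _ γ hα hβ hγ1 hre1
  have hs2 : Summable (fun n : ℕ => poch (1/2) n * poch ((γ-1)+1) n /
      (poch ((α+1)/2) (n+1) * poch ((β+1)/2) (n+1))) :=
    summable_key _ _ (γ-1) hα hβ hγ1' hre2
  have hU : Tendsto (fun n : ℕ => poch (1/2) n * poch γ n /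
      (poch ((α+1)/2) n * poch ((β+1)/2) n)) atTop (𝓝 0) :=
    tendsto_U_zero _ _ γ hα hβ hγ hre3
  set U : ℕ → ℂ := fun n => poch (1/2) n * poch γ n /
      (poch ((α+1)/2) n * poch ((β+1)/2) n) with hUdef
  set f : ℕ → ℂ := fun n => 2 * γ * (2 * γ - α - β - 1) / 4 *
        (poch (1/2) n * poch (γ+1) n / (poch ((α+1)/2) (n+1) * poch ((β+1)/2) (n+1)))
      - (2 * γ - α - 1) * (2 * γ - β - 1) / 4 *
        (poch (1/2) n * poch ((γ-1)+1) n / (poch ((α+1)/2) (n+1) * poch ((β+1)/2) (n+1)))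
    with hfdef
  have hf : Summable f := (hs1.mul_left _).sub (hs2.mul_left _)
  have hU0 : U 0 = 1 := by simp [hUdef, poch_zero]
  have hps : ∀ m : ℕ, ∑ i ∈ Finset.range m, f i = U m - 1 := by
    intro m
    have h1 : ∀ i ∈ Finset.range m, f i = U (i+1) - U i := fun i _ => tele α β γ hα hβ hγ i
    rw [Finset.sum_congr rfl h1, Finset.sum_range_sub U m, hU0]
  have hlim : Tendsto (fun m => ∑ i ∈ Finset.range m, f i) atTop (𝓝 (0 - 1)) := by
    have := hU.sub_const 1
    apply this.congr
    intro m
    exact (hps m).symm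
  have htsum : ∑' n, f n = 0 - 1 := tendsto_nhds_unique hf.hasSum.tendsto_sum_nat hlim
  have hsplit : ∑' n, f n = 2 * γ * (2 * γ - α - β - 1) / 4 * S α β γ
      - (2 * γ - α - 1) * (2 * γ - β - 1) / 4 * S α β (γ-1) := by
    rw [hfdef, Summable.tsum_sub (hs1.mul_left _) (hs2.mul_left _), tsum_mul_left, tsum_mul_left]
    rfl
  rw [hsplit] at htsum
  linear_combination htsum
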